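/- There exists a family {F_i : i ∈ ω} such that: each F_i consists of pairwise disjoint finite subsets of ℕ*; condition ☕(D,E) holds for every diagonal pair (D,E); and condition ♺ holds (no infinite choice x_i ∈ F_i over an infinite index set is linked). -/

import Mathlib

/-- ℕ* : the nonprincipal ultrafilters on ℕ, with the topology inherited from βℕ. -/
def NStar : Type := {U : Ultrafilter ℕ // (U : Filter ℕ) ≤ Filter.cofinite}

instance : TopologicalSpace NStar := instTopologicalSpaceSubtype

/-- A* : the set of nonprincipal ultrafilters containing A. -/
def AStar (A : Set ℕ) : Set NStar := {U | A ∈ U.1}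

/-- The space X(F): underlying set ℕ ⊔ F. -/
def XF (F : Set (Set NStar)) : Type := ℕ ⊕ F

/-- The coarsest topology making each {n} (n ∈ ℕ) open, and each {K} ∪ A open
whenever K ∈ F, A ⊆ ℕ and K ⊆ A*. -/
instance (F : Set (Set NStar)) : TopologicalSpace (XF F) :=
  TopologicalSpace.generateFrom
    ({S | ∃ n : ℕ, S = {Sum.inl n}} ∪
     {S | ∃ (K : F) (A : Set ℕ), (K : Set NStar) ⊆ AStar A ∧
        S = insert (Sum.inr K) (Sum.inl '' A)})

/-- D ⊆ ℕⁿ is diagonal: it is contained in no initial stripe union 𝕊ᴺ, contains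
no cofinite box 𝕋ᴺ, and all coordinate projections are injective on D. -/
def Diagonal (n : ℕ) (D : Set (Fin n → ℕ)) : Prop :=
  (∀ N : ℕ, ¬ D ⊆ {x | ∃ i, x i < N}) ∧
  (∀ N : ℕ, ¬ {x : Fin n → ℕ | ∀ i, N ≤ x i} ⊆ D) ∧
  (∀ i : Fin n, Set.InjOn (fun x => x i) D)

/-- Condition ☕(D,E): there are K_i ∈ F_{p(i)} such that D and E meet every box
A_0 × ⋯ × A_{n-1} with K_i ⊆ A_i*. -/
def Coffee (F : ℕ → Set (Set NStar)) {n : ℕ} (p : Fin n → ℕ)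
    (D E : Set (Fin n → ℕ)) : Prop :=
  ∃ K : Fin n → Set NStar, (∀ i, K i ∈ F (p i)) ∧
    ∀ A : Fin n → Set ℕ, (∀ i, K i ⊆ AStar (A i)) →
      (D ∩ {x | ∀ i, x i ∈ A i}).Nonempty ∧ (E ∩ {x | ∀ i, x i ∈ A i}).Nonempty

/-- Condition ♺: no infinite selection x_i ∈ F_i is linked. -/
def Bicycle (F : ℕ → Set (Set NStar)) : Prop :=
  ∀ I : Set ℕ, I.Infinite → ∀ x : ℕ → Set NStar, (∀ i ∈ I, x i ∈ F i) →
    ∃ i ∈ I, ∃ j ∈ I, i ≠ j ∧ Disjoint (x i) (x j)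

noncomputable section AuxCoffee

open Set Filter Cardinal

lemma ultra_map_inj {α β : Type*} {f : α → β} {s : Set α} (hf : Set.InjOn f s)
    {W W' : Ultrafilter α} (hW : s ∈ W) (hW' : s ∈ W')
    (h : Ultrafilter.map f W = Ultrafilter.map f W') : W = W' := by
  have key : ∀ X ∈ W, X ∈ W' := by
    intro X hX
    have h1 : f '' (X ∩ s) ∈ Ultrafilter.map f W := image_mem_map (inter_mem hX hW)
    rw [h] at h1
    have h2 : f ⁻¹' (f '' (X ∩ s)) ∈ W' := h1
    have h3 : f ⁻¹' (f '' (X ∩ s)) ∩ s ⊆ X := by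
      rintro a ⟨ha, has⟩
      obtain ⟨b, hb, hba⟩ := ha
      exact (hf hb.2 has hba ▸ hb.1 : a ∈ X)
    exact mem_of_superset (inter_mem h2 hW') h3
  have : (W' : Filter α) ≤ W := fun X hX => key X hX
  exact (Ultrafilter.coe_le_coe.mp this).symm

abbrev BB : Type := Finset ℚ × Finset (Finset ℚ)

noncomputable def rcut (F : Finset ℚ) (r : ℝ) : Finset ℚ := F.filter (fun q => (q : ℝ) < r)

def Ind (r : ℝ) : Set BB := {b | rcut b.1 r ∈ b.2}

open scoped Classical in
lemma ind_indep (s : Finset ℝ) (f : ℝ → Prop) :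
    {b : BB | ∀ r ∈ s, (b ∈ Ind r ↔ f r)}.Infinite := by
  obtain ⟨F₀, hF₀⟩ : ∃ F₀ : Finset ℚ, ∀ r ∈ s, ∀ r' ∈ s, r < r' →
      ∃ q ∈ F₀, r < (q : ℝ) ∧ (q : ℝ) < r' := by
    refine ⟨(s ×ˢ s).image (fun p => if h : p.1 < p.2 then Classical.choose (exists_rat_btwn h) else 0), ?_⟩
    intro r hr r' hr' hlt
    have hp : (r, r') ∈ s ×ˢ s := Finset.mem_product.2 ⟨hr, hr'⟩
    refine ⟨_, Finset.mem_image_of_mem _ hp, ?_⟩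
    simp only [dif_pos hlt]
    exact Classical.choose_spec (exists_rat_btwn hlt)
  set m : ℚ := if h : F₀.Nonempty then F₀.min' h else 0 with hm
  set low : ℕ → Finset ℚ := fun N => (Finset.range N).image (fun k : ℕ => m - 1 - (k : ℚ)) with hlow
  have hlowdisj : ∀ N, Disjoint F₀ (low N) := by
    intro N
    rw [Finset.disjoint_right]
    intro q hq hq'
    simp only [hlow, Finset.mem_image, Finset.mem_range] at hq
    obtain ⟨k, _, rfl⟩ := hq
    have hne : F₀.Nonempty := ⟨_, hq'⟩
    have h1 : F₀.min' hne ≤ m - 1 - (k:ℚ) := Finset.min'_le _ _ hq'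
    have h2 : m = F₀.min' hne := by rw [hm, dif_pos hne]
    rw [← h2] at h1
    have hk : (0:ℚ) ≤ (k:ℚ) := Nat.cast_nonneg k
    linarith
  have hlowcard : ∀ N, (low N).card = N := by
    intro N
    rw [hlow]
    rw [Finset.card_image_of_injective _ (fun a b hab => by
      have : (a:ℚ) = b := by simpa [sub_sub] using hab
      exact_mod_cast this), Finset.card_range]
  set FN : ℕ → Finset ℚ := fun N => F₀ ∪ low N with hFN
  set GN : ℕ → Finset (Finset ℚ) := fun N => (s.filter f).image (fun r => rcut (FN N) r) with hGN
  refine Set.infinite_of_injective_forall_mem (f := fun N => ((FN N, GN N) : BB)) ?_ ?_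
  · intro a b hab
    have : (FN a).card = (FN b).card := by rw [(Prod.mk.injEq _ _ _ _).mp hab |>.1]
    rw [hFN, Finset.card_union_of_disjoint (hlowdisj a),
      Finset.card_union_of_disjoint (hlowdisj b), hlowcard, hlowcard] at this
    omega
  · intro N r hr
    constructor
    · intro hmem
      by_contra hfr
      simp only [Ind, Set.mem_setOf_eq, hGN, Finset.mem_image, Finset.mem_filter] at hmem
      obtain ⟨r', ⟨hr's, hfr'⟩, heq⟩ := hmem
      have hne : r' ≠ r := fun h => hfr (h ▸ hfr')
      rcases lt_or_gt_of_ne hne with hlt | hlt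
      · obtain ⟨q, hq, hq1, hq2⟩ := hF₀ r' hr's r hr hlt
        have h1 : q ∈ rcut (FN N) r := Finset.mem_filter.2 ⟨Finset.mem_union_left _ hq, hq2⟩
        have h2 : q ∉ rcut (FN N) r' := fun h => absurd (Finset.mem_filter.1 h).2 (by linarith)
        exact h2 (heq ▸ h1)
      · obtain ⟨q, hq, hq1, hq2⟩ := hF₀ r hr r' hr's hlt
        have h1 : q ∈ rcut (FN N) r' := Finset.mem_filter.2 ⟨Finset.mem_union_left _ hq, hq2⟩
        have h2 : q ∉ rcut (FN N) r := fun h => absurd (Finset.mem_filter.1 h).2 (by linarith)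
        exact h2 (heq ▸ h1)
    · intro hfr
      exact Finset.mem_image_of_mem _ (Finset.mem_filter.2 ⟨hr, hfr⟩)

def XS (f : Set ℝ) (s : Finset ℝ) : Set BB := {b | ∀ r ∈ s, (b ∈ Ind r ↔ r ∈ f)}

def LF (f : Set ℝ) : Filter BB := ⨅ s : Finset ℝ, (𝓟 (XS f s) ⊓ cofinite)

lemma LF_neBot (f : Set ℝ) : (LF f).NeBot := by
  apply iInf_neBot_of_directed'
  · intro s t
    refine ⟨s ∪ t, ?_, ?_⟩ <;>
    · refine inf_le_inf_right _ (principal_mono.2 ?_)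
      intro b hb r hr
      exact hb r (by simp [Finset.mem_union, hr])
  · intro s
    have hinf : (XS f s).Infinite := ind_indep s (· ∈ f)
    have : NeBot (cofinite ⊓ 𝓟 (XS f s)) := cofinite_inf_principal_neBot_iff.2 hinf
    rwa [inf_comm] at this

def UF (f : Set ℝ) : Ultrafilter BB :=
  haveI := LF_neBot f
  Classical.choose (Ultrafilter.exists_le (LF f))

lemma UF_le (f : Set ℝ) : (UF f : Filter BB) ≤ LF f :=
  haveI := LF_neBot f
  Classical.choose_spec (Ultrafilter.exists_le (LF f))

lemma UF_cofinite (f : Set ℝ) : (UF f : Filter BB) ≤ cofinite :=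
  le_trans (UF_le f) (le_trans (iInf_le _ ∅) inf_le_right)

lemma XS_mem (f : Set ℝ) (s : Finset ℝ) : XS f s ∈ UF f := by
  have h : (UF f : Filter BB) ≤ 𝓟 (XS f s) :=
    le_trans (UF_le f) (le_trans (iInf_le _ s) inf_le_left)
  exact le_principal_iff.mp h

lemma UF_inj : Function.Injective UF := by
  intro f f' h
  ext r
  by_contra hr
  have h1 : XS f {r} ∈ UF f := XS_mem f {r}
  have h2 : XS f' {r} ∈ UF f := h ▸ XS_mem f' {r}
  obtain ⟨b, hb1, hb2⟩ := Ultrafilter.nonempty_of_mem (inter_mem h1 h2)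
  exact hr ((hb1 r (Finset.mem_singleton_self r)).symm.trans (hb2 r (Finset.mem_singleton_self r)))

/-- Transport: many free ultrafilters containing a given infinite subset of a countable type. -/
lemma many_ultra {β : Type} [Countable β] (D : Set β) (hD : D.Infinite) :
    Cardinal.continuum < #{W : Ultrafilter β // D ∈ W ∧ (W : Filter β) ≤ cofinite} := by
  haveI : Infinite ↥D := hD.to_subtype
  obtain ⟨e⟩ : Nonempty (BB ≃ ↥D) := nonempty_equiv_of_countable
  set χ : BB → β := fun b => (e b : β) with hχ
  have hχinj : Function.Injective χ := fun a b hab => e.injective (Subtype.ext hab)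
  have hχD : ∀ b, χ b ∈ D := fun b => (e b).2
  set Φ : Set ℝ → Ultrafilter β := fun f => Ultrafilter.map χ (UF f) with hΦ
  have hmemD : ∀ f, D ∈ Φ f := by
    intro f
    have hpre : χ ⁻¹' D = Set.univ := eq_univ_of_forall (fun b => hχD b)
    exact mem_map.2 (hpre ▸ univ_mem)
  have hcof : ∀ f, (Φ f : Filter β) ≤ cofinite := by
    intro f
    rw [le_cofinite_iff_compl_singleton_mem]
    intro y
    have : (χ ⁻¹' {y}).Finite := (Set.finite_singleton y).preimage (hχinj.injOn)
    have h2 : (χ ⁻¹' {y})ᶜ ∈ UF f := UF_cofinite f this.compl_mem_cofinite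
    exact mem_map.2 (by simpa using h2)
  have hinj : Function.Injective (fun f => (⟨Φ f, hmemD f, hcof f⟩ :
      {W : Ultrafilter β // D ∈ W ∧ (W : Filter β) ≤ cofinite})) := by
    intro f f' h
    have : Φ f = Φ f' := congrArg Subtype.val h
    exact UF_inj (ultra_map_inj (hχinj.injOn) univ_mem univ_mem this)
  calc Cardinal.continuum < 2 ^ Cardinal.continuum := cantor _
    _ = #(Set ℝ) := by rw [mk_set, mk_real]
    _ ≤ _ := mk_le_of_injective hinj

lemma exists_fresh {β : Type} [Countable β] (D : Set β) (hD : D.Infinite)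
    {n : ℕ} (proj : Fin n → β → ℕ) (hinj : ∀ i, Set.InjOn (proj i) D)
    (Used : Set NStar) (hU : #Used ≤ Cardinal.continuum) :
    ∃ W : Ultrafilter β, D ∈ W ∧ (W : Filter β) ≤ cofinite ∧
      ∀ i, ∀ V ∈ Used, Ultrafilter.map (proj i) W ≠ (V : NStar).1 := by
  set Good := {W : Ultrafilter β // D ∈ W ∧ (W : Filter β) ≤ cofinite} with hGood
  set Bad : Fin n → Set Good := fun i =>
    {W : Good | ∃ V ∈ Used, Ultrafilter.map (proj i) W.1 = (V : NStar).1} with hBad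
  have hBadle : ∀ i, #(Bad i) ≤ #Used := by
    intro i
    have : ∀ W : Bad i, ∃ V, V ∈ Used ∧ Ultrafilter.map (proj i) W.1.1 = (V : NStar).1 := by
      rintro ⟨W, hW⟩; exact hW
    choose g hg1 hg2 using this
    refine mk_le_of_injective (f := fun W => (⟨g W, hg1 W⟩ : Used)) ?_
    intro W W' h
    have hgg : g W = g W' := congrArg Subtype.val h
    have : Ultrafilter.map (proj i) W.1.1 = Ultrafilter.map (proj i) W'.1.1 := by
      rw [hg2 W, hg2 W', hgg]
    exact Subtype.ext (Subtype.ext (ultra_map_inj (hinj i) W.1.2.1 W'.1.2.1 this))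
  have hUb : #(⋃ i, Bad i) ≤ Cardinal.continuum := by
    refine le_trans (mk_iUnion_le _) ?_
    have h1 : #(Fin n) ≤ Cardinal.continuum :=
      le_trans (mk_le_aleph0) aleph0_le_continuum
    have h2 : ⨆ i, #(Bad i) ≤ Cardinal.continuum := by
      refine ciSup_le' (fun i => le_trans (hBadle i) hU)
    calc #(Fin n) * ⨆ i, #(Bad i) ≤ Cardinal.continuum * Cardinal.continuum :=
          mul_le_mul' h1 h2
      _ = Cardinal.continuum := by simp
  obtain ⟨W, hW⟩ : ∃ W : Good, W ∉ ⋃ i, Bad i := by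
    by_contra h
    push_neg at h
    have : (Set.univ : Set Good) ⊆ ⋃ i, Bad i := fun W _ => h W
    have h2 := mk_le_mk_of_subset this
    rw [mk_univ] at h2
    exact absurd (h2.trans hUb) (not_le.2 (many_ultra D hD))
  refine ⟨W.1, W.2.1, W.2.2, ?_⟩
  intro i V hV heq
  exact hW (Set.mem_iUnion.2 ⟨i, ⟨V, hV, heq⟩⟩)

lemma Diagonal.pos {n : ℕ} {D : Set (Fin n → ℕ)} (h : Diagonal n D) : 0 < n := by
  rcases Nat.eq_zero_or_pos n with rfl | h1
  · exfalso
    obtain ⟨x₀, hx₀, -⟩ : ∃ x ∈ D, True := by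
      obtain ⟨x, hx, -⟩ := Set.not_subset.1 (h.1 0)
      exact ⟨x, hx, trivial⟩
    refine h.2.1 0 (fun y _ => ?_)
    have : y = x₀ := funext (fun i => i.elim0)
    exact this ▸ hx₀
  · exact h1

lemma Diagonal.infinite {n : ℕ} {D : Set (Fin n → ℕ)} (h : Diagonal n D) : D.Infinite := by
  have hpos := h.pos
  set i0 : Fin n := ⟨0, hpos⟩
  have himg : ¬ BddAbove ((fun x => x i0) '' D) := by
    rintro ⟨M, hM⟩
    obtain ⟨x, hx, hx2⟩ := Set.not_subset.1 (h.1 (M + 1))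
    have : x i0 ≤ M := hM ⟨x, hx, rfl⟩
    exact hx2 ⟨i0, by omega⟩
  have : ((fun x => x i0) '' D).Infinite := Set.infinite_of_not_bddAbove himg
  exact Set.Infinite.of_image _ this

/-- free ultrafilter on ℕ obtained from projecting W -/
lemma map_proj_free {n : ℕ} {D : Set (Fin n → ℕ)} {W : Ultrafilter (Fin n → ℕ)}
    (hW : D ∈ W) (hWc : (W : Filter (Fin n → ℕ)) ≤ cofinite) (i : Fin n)
    (hinj : Set.InjOn (fun x => x i) D) :
    (Ultrafilter.map (fun x => x i) W : Filter ℕ) ≤ cofinite := by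
  rw [le_cofinite_iff_compl_singleton_mem]
  intro y
  set P : Set (Fin n → ℕ) := (fun x => x i) ⁻¹' {y} with hP
  have hfin : (P ∩ D).Finite := by
    refine Set.Subsingleton.finite ?_
    intro a ⟨ha1, ha2⟩ b ⟨hb1, hb2⟩
    refine hinj ha2 hb2 ?_
    simp only [hP, Set.mem_preimage, Set.mem_singleton_iff] at ha1 hb1
    simp [ha1, hb1]
  have h1 : (P ∩ D)ᶜ ∈ W := hWc hfin.compl_mem_cofinite
  have h2 : D ∩ (P ∩ D)ᶜ ∈ W := inter_mem hW h1
  have h3 : D ∩ (P ∩ D)ᶜ ⊆ Pᶜ := by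
    rintro b ⟨hb1, hb2⟩ hbP
    exact hb2 ⟨hbP, hb1⟩
  exact mem_map.2 (mem_of_superset h2 h3)

lemma main_step {n : ℕ} (D E : Set (Fin n → ℕ)) (hD : Diagonal n D) (hE : Diagonal n E)
    (Used : Set NStar) (hU : #Used ≤ Cardinal.continuum) :
    ∃ S : Set NStar, S.Finite ∧ S.Nonempty ∧ (∀ V ∈ Used, V ∉ S) ∧
      ∀ A : Fin n → Set ℕ, (∀ i, S ⊆ AStar (A i)) →
        (D ∩ {x | ∀ i, x i ∈ A i}).Nonempty ∧ (E ∩ {x | ∀ i, x i ∈ A i}).Nonempty := by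
  obtain ⟨W, hWD, hWc, hWfresh⟩ :=
    exists_fresh D hD.infinite (fun i x => x i) hD.2.2 Used hU
  set Ui : Fin n → NStar := fun i =>
    ⟨Ultrafilter.map (fun x => x i) W, map_proj_free hWD hWc i (hD.2.2 i)⟩ with hUi
  set SD : Set NStar := Set.range Ui with hSD
  have hSDfin : SD.Finite := Set.finite_range Ui
  have hU' : #(Used ∪ SD : Set NStar) ≤ Cardinal.continuum := by
    refine le_trans (mk_union_le _ _) ?_
    have h2 : #SD ≤ Cardinal.continuum :=
      le_trans (le_of_lt hSDfin.lt_aleph0) aleph0_le_continuum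
    calc #Used + #SD ≤ Cardinal.continuum + Cardinal.continuum := add_le_add hU h2
      _ = Cardinal.continuum := by simp
  obtain ⟨W', hWE, hWc', hWfresh'⟩ :=
    exists_fresh E hE.infinite (fun i x => x i) hE.2.2 (Used ∪ SD) hU'
  set Vi : Fin n → NStar := fun i =>
    ⟨Ultrafilter.map (fun x => x i) W', map_proj_free hWE hWc' i (hE.2.2 i)⟩ with hVi
  refine ⟨SD ∪ Set.range Vi, hSDfin.union (Set.finite_range Vi),
    ⟨Ui ⟨0, hD.pos⟩, Or.inl (Set.mem_range_self _)⟩, ?_, ?_⟩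
  · rintro V hV (hVS | hVS)
    · obtain ⟨i, hi⟩ := hVS
      exact hWfresh i V hV (congrArg Subtype.val hi)
    · obtain ⟨i, hi⟩ := hVS
      exact hWfresh' i V (Or.inl hV) (congrArg Subtype.val hi)
  · intro A hA
    constructor
    · have hmem : ∀ i, (fun x : Fin n → ℕ => x i) ⁻¹' (A i) ∈ W := by
        intro i
        exact hA i (Or.inl (Set.mem_range_self i))
      have hT : D ∩ ⋂ i, ((fun x : Fin n → ℕ => x i) ⁻¹' (A i)) ∈ W :=
        inter_mem hWD (iInter_mem.2 hmem)
      obtain ⟨x, hx1, hx2⟩ := Ultrafilter.nonempty_of_mem hT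
      exact ⟨x, hx1, fun i => by simpa using Set.mem_iInter.1 hx2 i⟩
    · have hmem : ∀ i, (fun x : Fin n → ℕ => x i) ⁻¹' (A i) ∈ W' := by
        intro i
        exact hA i (Or.inr (Set.mem_range_self i))
      have hT : E ∩ ⋂ i, ((fun x : Fin n → ℕ => x i) ⁻¹' (A i)) ∈ W' :=
        inter_mem hWE (iInter_mem.2 hmem)
      obtain ⟨x, hx1, hx2⟩ := Ultrafilter.nonempty_of_mem hT
      exact ⟨x, hx1, fun i => by simpa using Set.mem_iInter.1 hx2 i⟩

/-- The type of tasks. -/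
def Task0 : Type := Σ n : ℕ, (Fin n → ℕ) × Set (Fin n → ℕ) × Set (Fin n → ℕ)

lemma card_task : #Task0 ≤ Cardinal.continuum := by
  have h : ∀ n : ℕ, #((Fin n → ℕ) × Set (Fin n → ℕ) × Set (Fin n → ℕ)) ≤ Cardinal.continuum := by
    intro n
    have h1 : #(Fin n → ℕ) ≤ Cardinal.continuum := mk_le_aleph0.trans aleph0_le_continuum
    have h2 : #(Set (Fin n → ℕ)) ≤ Cardinal.continuum := by
      rw [mk_set]
      calc (2 : Cardinal) ^ #(Fin n → ℕ) ≤ 2 ^ aleph0 :=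
            power_le_power_left two_ne_zero mk_le_aleph0
        _ = Cardinal.continuum := two_power_aleph0
    rw [mk_prod, mk_prod]
    simp only [lift_id]
    calc #(Fin n → ℕ) * (#(Set (Fin n → ℕ)) * #(Set (Fin n → ℕ)))
        ≤ Cardinal.continuum * (Cardinal.continuum * Cardinal.continuum) :=
          mul_le_mul' h1 (mul_le_mul' h2 h2)
      _ = Cardinal.continuum := by simp
  rw [show Task0 = (Σ n : ℕ, (Fin n → ℕ) × Set (Fin n → ℕ) × Set (Fin n → ℕ)) from rfl, mk_sigma]
  calc (Cardinal.sum fun n : ℕ => #((Fin n → ℕ) × Set (Fin n → ℕ) × Set (Fin n → ℕ)))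
      ≤ Cardinal.sum fun _ : ℕ => Cardinal.continuum := Cardinal.sum_le_sum _ _ h
    _ = #ℕ * Cardinal.continuum := by rw [Cardinal.sum_const, lift_id, mk_nat, lift_id]
    _ ≤ Cardinal.continuum * Cardinal.continuum :=
        mul_le_mul' (mk_le_aleph0.trans aleph0_le_continuum) le_rfl
    _ = Cardinal.continuum := by simp

/-- the property a chosen set should have, given the tasks and used points -/
def GoodS (t : Task0) (Used : Set NStar) (S : Set NStar) : Prop :=
  S.Nonempty ∧ (∀ V ∈ Used, V ∉ S) ∧
    ∀ A : Fin t.1 → Set ℕ, (∀ i, S ⊆ AStar (A i)) →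
      (t.2.2.1 ∩ {x | ∀ i, x i ∈ A i}).Nonempty ∧ (t.2.2.2 ∩ {x | ∀ i, x i ∈ A i}).Nonempty

lemma step (t : Task0) (Used : Set NStar) :
    ∃ S : Set NStar, S.Finite ∧
      (Diagonal t.1 t.2.2.1 → Diagonal t.1 t.2.2.2 → #Used ≤ Cardinal.continuum →
        GoodS t Used S) := by
  by_cases h : Diagonal t.1 t.2.2.1 ∧ Diagonal t.1 t.2.2.2 ∧ #Used ≤ Cardinal.continuum
  · obtain ⟨S, h1, h2, h3, h4⟩ := main_step t.2.2.1 t.2.2.2 h.1 h.2.1 Used h.2.2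
    exact ⟨S, h1, fun _ _ _ => ⟨h2, h3, h4⟩⟩
  · exact ⟨∅, finite_empty, fun hD hE hU => absurd ⟨hD, hE, hU⟩ h⟩

def trel : Task0 → Task0 → Prop := WellOrderingRel

instance trel_wo : IsWellOrder Task0 trel := WellOrderingRel.isWellOrder

def KK : Task0 → Set NStar :=
  (IsWellFounded.wf (r := trel)).fix
    (fun t ih => Classical.choose (step t (⋃ s, ⋃ h : trel s t, ih s h)))

lemma KK_eq (t : Task0) :
    KK t = Classical.choose (step t (⋃ s, ⋃ _ : trel s t, KK s)) := by
  conv_lhs => rw [KK, WellFounded.fix_eq]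
  rfl

lemma KK_fin (t : Task0) : (KK t).Finite := by
  rw [KK_eq]
  exact (Classical.choose_spec (step t _)).1

lemma used_card (t : Task0) : #(⋃ s, ⋃ _ : trel s t, KK s : Set NStar) ≤ Cardinal.continuum := by
  have hsub : (⋃ s, ⋃ _ : trel s t, KK s : Set NStar) ⊆ ⋃ s : Task0, KK s := by
    exact Set.iUnion₂_subset fun s _ => Set.subset_iUnion _ s
  refine le_trans (mk_le_mk_of_subset hsub) ?_
  refine le_trans (mk_iUnion_le _) ?_
  have h2 : ⨆ s : Task0, #(KK s) ≤ aleph0 :=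
    ciSup_le' (fun s => le_of_lt (KK_fin s).lt_aleph0)
  calc #Task0 * ⨆ s : Task0, #(KK s) ≤ Cardinal.continuum * aleph0 :=
        mul_le_mul' card_task h2
    _ ≤ Cardinal.continuum * Cardinal.continuum := mul_le_mul' le_rfl aleph0_le_continuum
    _ = Cardinal.continuum := by simp

lemma KK_spec (t : Task0) (hD : Diagonal t.1 t.2.2.1) (hE : Diagonal t.1 t.2.2.2) :
    GoodS t (⋃ s, ⋃ _ : trel s t, KK s) (KK t) := by
  rw [KK_eq]
  exact (Classical.choose_spec (step t _)).2 hD hE (used_card t)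

lemma KK_disjoint {s t : Task0} (hst : s ≠ t)
    (hDs : Diagonal s.1 s.2.2.1) (hEs : Diagonal s.1 s.2.2.2)
    (hDt : Diagonal t.1 t.2.2.1) (hEt : Diagonal t.1 t.2.2.2) :
    Disjoint (KK s) (KK t) := by
  have key : ∀ {a b : Task0}, trel a b → Diagonal b.1 b.2.2.1 → Diagonal b.1 b.2.2.2 →
      Disjoint (KK a) (KK b) := by
    intro a b hab hDb hEb
    rw [Set.disjoint_left]
    intro V hVa hVb
    have hmem : V ∈ (⋃ s, ⋃ _ : trel s b, KK s : Set NStar) :=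
      Set.mem_iUnion.2 ⟨a, Set.mem_iUnion.2 ⟨hab, hVa⟩⟩
    exact (KK_spec b hDb hEb).2.1 V hmem hVb
  rcases trichotomous_of trel s t with h | h | h
  · exact key h hDt hEt
  · exact absurd h hst
  · exact (key h hDs hEs).symm

/-- The family. -/
def Fam : ℕ → Set (Set NStar) := fun m =>
  {S | ∃ t : Task0, Diagonal t.1 t.2.2.1 ∧ Diagonal t.1 t.2.2.2 ∧
    (∃ i : Fin t.1, t.2.1 i = m) ∧ S = KK t}

end AuxCoffee

/-- There is a family {F_i : i ∈ ω} of families of pairwise disjoint non-empty finite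
subsets of ℕ* such that ☕(D,E) holds for every diagonal pair and ♺ holds. -/
theorem exists_family : ∃ F : ℕ → Set (Set NStar),
    (∀ i, ∀ K ∈ F i, Set.Finite K) ∧
    (∀ i, ∀ K ∈ F i, Set.Nonempty K) ∧
    (∀ i, ∀ K ∈ F i, ∀ L ∈ F i, K ≠ L → Disjoint K L) ∧
    (∀ (n : ℕ) (p : Fin n → ℕ) (D E : Set (Fin n → ℕ)),
      Diagonal n D → Diagonal n E → Coffee F p D E) ∧
    Bicycle F := by
  refine ⟨Fam, ?_, ?_, ?_, ?_, ?_⟩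
  · rintro i K ⟨t, -, -, -, rfl⟩
    exact KK_fin t
  · rintro i K ⟨t, hD, hE, -, rfl⟩
    exact (KK_spec t hD hE).1
  · rintro i K ⟨t, hDt, hEt, -, rfl⟩ L ⟨s, hDs, hEs, -, rfl⟩ hne
    have hts : t ≠ s := fun h => hne (congrArg KK h)
    exact KK_disjoint hts hDt hEt hDs hEs
  · intro n p D E hD hE
    set t : Task0 := ⟨n, p, D, E⟩ with ht
    refine ⟨fun _ => KK t, fun i => ⟨t, hD, hE, ⟨i, rfl⟩, rfl⟩, ?_⟩
    intro A hA
    exact (KK_spec t hD hE).2.2 A hA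
  · intro I hI x hx
    by_contra hcon
    push_neg at hcon
    have hsel : ∀ i ∈ I, ∃ t : Task0, Diagonal t.1 t.2.2.1 ∧ Diagonal t.1 t.2.2.2 ∧
        (∃ k : Fin t.1, t.2.1 k = i) ∧ x i = KK t := fun i hi => hx i hi
    choose tf h1 h2 h3 h4 using hsel
    obtain ⟨i0, hi0⟩ := hI.nonempty
    have hsame : ∀ j (hj : j ∈ I), tf j hj = tf i0 hi0 := by
      intro j hj
      by_cases hji : j = i0
      · subst hji; rfl
      · by_contra hne
        have hdisj : Disjoint (x j) (x i0) := by
          rw [h4 j hj, h4 i0 hi0]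
          exact KK_disjoint hne (h1 j hj) (h2 j hj) (h1 i0 hi0) (h2 i0 hi0)
        exact hcon j hj i0 hi0 hji hdisj
    have hIsub : I ⊆ Set.range (fun k : Fin (tf i0 hi0).1 => (tf i0 hi0).2.1 k) := by
      intro j hj
      have h3' := h3 j hj
      rw [hsame j hj] at h3'
      obtain ⟨k, hk⟩ := h3'
      exact ⟨k, hk⟩
    exact hI (Set.Finite.subset (Set.finite_range _) hIsub)
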